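/- Suppose F : (0,∞) → [0,1] is a differentiable distribution function satisfying F'(x) = F(x)(1 − F(x))/x for all x > 0, with F(x) → 1 as x → ∞. Then either F ≡ 1 on (0,∞), or there exists a > 0 such that F(x) = x/(a+x) for all x > 0. -/

import Mathlib

open Set

private lemma Hderiv {F : ℝ → ℝ} {x : ℝ} (hx : 0 < x) (hF0 : F x ≠ 0)
    (hd : HasDerivAt F (F x * (1 - F x) / x) x) :
    HasDerivAt (fun y => y * (1 - F y) / F y) 0 x := by
  have h1 : HasDerivAt (fun y => y * (1 - F y))
      (1 * (1 - F x) + x * (0 - F x * (1 - F x) / x)) x :=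
    (hasDerivAt_id x).mul ((hasDerivAt_const x 1).sub hd)
  have h2 := h1.div hd hF0
  have h3 : ((1 * (1 - F x) + x * (0 - F x * (1 - F x) / x)) * F x
      - x * (1 - F x) * (F x * (1 - F x) / x)) / F x ^ 2 = 0 := by
    have hx0 : x ≠ 0 := hx.ne'
    field_simp
    ring
  rw [h3] at h2
  exact h2

private lemma Hconst {F : ℝ → ℝ}
    (hderiv : ∀ x > 0, HasDerivAt F (F x * (1 - F x) / x) x)
    {p q : ℝ} (hp : 0 < p)
    (hF : ∀ x, p < x → x < q → 0 < F x ∧ F x < 1) :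
    ∀ x y, p < x → x < q → p < y → y < q →
      x * (1 - F x) / F x = y * (1 - F y) / F y := by
  have main : ∀ a b, p < a → b < q → a < b →
      a * (1 - F a) / F a = b * (1 - F b) / F b := by
    intro a b hpa hbq hab
    have hmem : ∀ z ∈ Icc a b, HasDerivAt (fun y => y * (1 - F y) / F y) 0 z := by
      intro z hz
      have hpz : p < z := lt_of_lt_of_le hpa hz.1
      have hz0 : 0 < z := lt_trans hp hpz
      have hzq : z < q := lt_of_le_of_lt hz.2 hbq
      exact Hderiv hz0 (hF z hpz hzq).1.ne' (hderiv z hz0)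
    have hcont : ContinuousOn (fun y => y * (1 - F y) / F y) (Icc a b) :=
      fun z hz => (hmem z hz).continuousAt.continuousWithinAt
    obtain ⟨c, _, hc⟩ := exists_hasDerivAt_eq_slope (fun y => y * (1 - F y) / F y)
      (fun _ => 0) hab hcont (fun z hz => hmem z ⟨hz.1.le, hz.2.le⟩)
    have hba : b - a ≠ 0 := by linarith
    have := hc.symm
    rw [div_eq_zero_iff] at this
    rcases this with h | h
    · linarith
    · exact absurd h hba
  intro x y hpx hxq hpy hyq
  rcases lt_trichotomy x y with h | h | h
  · exact main x y hpx hyq h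
  · rw [h]
  · exact (main y x hpy hxq h).symm

private lemma limit_left {F : ℝ → ℝ} {a p t : ℝ} (hpt : p < t) (hat : a + t ≠ 0)
    (hcont : ContinuousAt F t)
    (heq : ∀ x, p < x → x < t → F x = x / (a + x)) :
    F t = t / (a + t) := by
  have hg : ContinuousAt (fun x : ℝ => x / (a + x)) t :=
    continuousAt_id.div (continuousAt_const.add continuousAt_id) hat
  have h1 : Filter.Tendsto F (nhdsWithin t (Iio t)) (nhds (F t)) :=
    (hcont.tendsto).mono_left nhdsWithin_le_nhds
  have h2 : Filter.Tendsto (fun x : ℝ => x / (a + x)) (nhdsWithin t (Iio t))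
      (nhds (t / (a + t))) := (hg.tendsto).mono_left nhdsWithin_le_nhds
  have hev : F =ᶠ[nhdsWithin t (Iio t)] fun x => x / (a + x) := by
    filter_upwards [Ioo_mem_nhdsLT_of_mem (⟨hpt, le_refl t⟩ : t ∈ Ioc p t)] with x hx
    exact heq x hx.1 hx.2
  exact tendsto_nhds_unique (h1.congr' hev) h2

private lemma limit_right {F : ℝ → ℝ} {a q t : ℝ} (htq : t < q) (hat : a + t ≠ 0)
    (hcont : ContinuousAt F t)
    (heq : ∀ x, t < x → x < q → F x = x / (a + x)) :
    F t = t / (a + t) := by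
  have hg : ContinuousAt (fun x : ℝ => x / (a + x)) t :=
    continuousAt_id.div (continuousAt_const.add continuousAt_id) hat
  have h1 : Filter.Tendsto F (nhdsWithin t (Ioi t)) (nhds (F t)) :=
    (hcont.tendsto).mono_left nhdsWithin_le_nhds
  have h2 : Filter.Tendsto (fun x : ℝ => x / (a + x)) (nhdsWithin t (Ioi t))
      (nhds (t / (a + t))) := (hg.tendsto).mono_left nhdsWithin_le_nhds
  have hev : F =ᶠ[nhdsWithin t (Ioi t)] fun x => x / (a + x) := by
    filter_upwards [Ioo_mem_nhdsGT_of_mem (⟨le_refl t, htq⟩ : t ∈ Ico t q)] with x hx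
    exact heq x hx.1 hx.2
  exact tendsto_nhds_unique (h1.congr' hev) h2

private lemma solveF {x u a : ℝ} (hx : 0 < x) (hu0 : 0 < u) (hu1 : u < 1)
    (ha : x * (1 - u) / u = a) : u = x / (a + x) := by
  have h1u : 0 < 1 - u := by linarith
  have hkey : 0 < a + x := by
    have := div_pos (mul_pos hx h1u) hu0
    rw [ha] at this
    linarith
  rw [eq_div_iff hkey.ne', ← ha]
  field_simp
  ring

/-- Suppose `F : (0,∞) → [0,1]` is a differentiable distribution
function (nondecreasing on `(0,∞)`, with values in `[0,1]` and limit `1` at `∞`)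
satisfying the ODE `F'(x) = F(x)(1 - F(x))/x` for all `x > 0`. Then either `F ≡ 1`
on `(0,∞)`, or there exists `a > 0` with `F(x) = x/(a+x)` for all `x > 0`. -/
theorem ode_characterization_of_max_rde_solutions
    (F : ℝ → ℝ)
    (hrange : ∀ x > 0, F x ∈ Icc (0:ℝ) 1)
    (hmono : MonotoneOn F (Ioi (0:ℝ)))
    (hderiv : ∀ x > 0, HasDerivAt F (F x * (1 - F x) / x) x)
    (hlim : Filter.Tendsto F Filter.atTop (nhds 1)) :
    (∀ x > 0, F x = 1) ∨ ∃ a > 0, ∀ x > 0, F x = x / (a + x) := by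
  by_cases hall : ∀ x > 0, F x = 1
  · exact Or.inl hall
  push_neg at hall
  obtain ⟨x₁, hx₁pos, hx₁ne⟩ := hall
  have hx₁lt : F x₁ < 1 := lt_of_le_of_ne (hrange x₁ hx₁pos).2 hx₁ne
  -- Step 1: F < 1 everywhere on (0, ∞)
  have hlt : ∀ x > 0, F x < 1 := by
    intro x₀ hx₀pos
    by_contra hge
    have hFx₀ : F x₀ = 1 := le_antisymm (hrange x₀ hx₀pos).2 (not_lt.mp hge)
    set S : Set ℝ := {x | 0 < x ∧ F x = 1} with hSdef
    have hSne : S.Nonempty := ⟨x₀, hx₀pos, hFx₀⟩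
    have hlb : ∀ u ∈ S, x₁ ≤ u := by
      intro u hu
      by_contra hc
      push_neg at hc
      have h := hmono (mem_Ioi.mpr hu.1) (mem_Ioi.mpr hx₁pos) hc.le
      rw [hu.2] at h
      linarith
    have hbdd : BddBelow S := ⟨x₁, hlb⟩
    set t := sInf S with htdef
    have hx₁t : x₁ ≤ t := le_csInf hSne hlb
    have htpos : 0 < t := lt_of_lt_of_le hx₁pos hx₁t
    have hcontt : ContinuousAt F t := (hderiv t htpos).continuousAt
    have hFt : F t = 1 := by
      by_contra hne'
      have hlt1 : F t < 1 := lt_of_le_of_ne (hrange t htpos).2 hne'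
      have hev : ∀ᶠ x in nhds t, F x < 1 :=
        hcontt.eventually_lt continuousAt_const hlt1
      obtain ⟨ε, hε, hball⟩ := Metric.eventually_nhds_iff.mp hev
      have hle : t + ε ≤ t := by
        apply le_csInf hSne
        intro u hu
        by_contra hc
        push_neg at hc
        have hut : t ≤ u := csInf_le hbdd hu
        have hd : dist u t < ε := by
          rw [Real.dist_eq, abs_of_nonneg (by linarith)]
          linarith
        have := hball hd
        rw [hu.2] at this
        linarith
      linarith
    have hbelow : ∀ x, 0 < x → x < t → F x < 1 := by
      intro x hx hxt
      refine lt_of_le_of_ne (hrange x hx).2 (fun h => ?_)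
      exact absurd (csInf_le hbdd ⟨hx, h⟩) (not_le.mpr hxt)
    have hev2 : ∀ᶠ x in nhds t, (1:ℝ)/2 < F x :=
      continuousAt_const.eventually_lt hcontt (by rw [hFt]; norm_num)
    obtain ⟨δ, hδ, hball2⟩ := Metric.eventually_nhds_iff.mp hev2
    set p : ℝ := max (t/2) (t - δ/2) with hpdef
    have hppos : 0 < p := lt_of_lt_of_le (half_pos htpos) (le_max_left _ _)
    have hpt : p < t := max_lt (by linarith) (by linarith)
    have hFmid : ∀ x, p < x → x < t → 0 < F x ∧ F x < 1 := by
      intro x h1 h2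
      have hx0 : 0 < x := lt_trans hppos h1
      have hd : dist x t < δ := by
        rw [Real.dist_eq, abs_of_nonpos (by linarith)]
        have hple : t - δ/2 ≤ p := le_max_right _ _
        linarith
      exact ⟨by linarith [hball2 hd], hbelow x hx0 h2⟩
    have hkey := Hconst hderiv hppos hFmid
    set p' : ℝ := (p + t)/2 with hp'def
    have hp'1 : p < p' := by rw [hp'def]; linarith
    have hp'2 : p' < t := by rw [hp'def]; linarith
    have hF' := hFmid p' hp'1 hp'2
    set a : ℝ := p' * (1 - F p') / F p' with hadef
    have hapos : 0 < a :=
      div_pos (mul_pos (lt_trans hppos hp'1) (by linarith [hF'.2])) hF'.1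
    have heq : ∀ x, p < x → x < t → F x = x / (a + x) := by
      intro x h1 h2
      exact solveF (lt_trans hppos h1) (hFmid x h1 h2).1 (hFmid x h1 h2).2
        (hkey x p' h1 h2 hp'1 hp'2)
    have hat : a + t ≠ 0 := by positivity
    have hFt2 : F t = t / (a + t) := limit_left hpt hat hcontt heq
    rw [hFt, eq_comm, div_eq_one_iff_eq hat] at hFt2
    linarith
  -- Step 2: F > 0 everywhere on (0, ∞)
  have hpos : ∀ x > 0, 0 < F x := by
    intro y hy
    by_contra hc
    have hF0 : F y = 0 := le_antisymm (not_lt.mp hc) (hrange y hy).1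
    obtain ⟨x₂, hx₂half, hx₂pos⟩ : ∃ x₂, (1:ℝ)/2 < F x₂ ∧ 0 < x₂ := by
      have h1 : ∀ᶠ x in Filter.atTop, (1:ℝ)/2 < F x :=
        hlim.eventually (eventually_gt_nhds (by norm_num))
      exact (h1.and (Filter.eventually_gt_atTop 0)).exists
    set S : Set ℝ := {x | 0 < x ∧ F x = 0} with hSdef
    have hSne : S.Nonempty := ⟨y, hy, hF0⟩
    have hub : ∀ u ∈ S, u ≤ x₂ := by
      intro u hu
      by_contra hc2
      push_neg at hc2
      have h := hmono (mem_Ioi.mpr hx₂pos) (mem_Ioi.mpr hu.1) hc2.le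
      rw [hu.2] at h
      linarith
    have hbdd : BddAbove S := ⟨x₂, hub⟩
    set s := sSup S with hsdef
    have hys : y ≤ s := le_csSup hbdd ⟨hy, hF0⟩
    have hspos : 0 < s := lt_of_lt_of_le hy hys
    have hconts : ContinuousAt F s := (hderiv s hspos).continuousAt
    have hFs : F s = 0 := by
      by_contra hne'
      have h0 : 0 < F s := lt_of_le_of_ne (hrange s hspos).1 (Ne.symm hne')
      have hev : ∀ᶠ x in nhds s, 0 < F x :=
        continuousAt_const.eventually_lt hconts h0
      obtain ⟨ε, hε, hball⟩ := Metric.eventually_nhds_iff.mp hev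
      have hle : s ≤ s - ε := by
        apply csSup_le hSne
        intro u hu
        by_contra hc2
        push_neg at hc2
        have hus : u ≤ s := le_csSup hbdd hu
        have hd : dist u s < ε := by
          rw [Real.dist_eq, abs_of_nonpos (by linarith)]
          linarith
        have := hball hd
        rw [hu.2] at this
        linarith
      linarith
    have habove : ∀ x, s < x → 0 < F x := by
      intro x hx
      refine lt_of_le_of_ne (hrange x (lt_trans hspos hx)).1 (fun h => ?_)
      exact absurd (le_csSup hbdd ⟨lt_trans hspos hx, h.symm⟩) (not_le.mpr hx)
    have hFmid : ∀ x, s < x → x < s + 1 → 0 < F x ∧ F x < 1 := by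
      intro x h1 _
      exact ⟨habove x h1, hlt x (lt_trans hspos h1)⟩
    have hkey := Hconst hderiv hspos hFmid
    set p' : ℝ := s + 1/2 with hp'def
    have hp'1 : s < p' := by rw [hp'def]; linarith
    have hp'2 : p' < s + 1 := by rw [hp'def]; linarith
    have hF' := hFmid p' hp'1 hp'2
    set a : ℝ := p' * (1 - F p') / F p' with hadef
    have hapos : 0 < a :=
      div_pos (mul_pos (lt_trans hspos hp'1) (by linarith [hF'.2])) hF'.1
    have heq : ∀ x, s < x → x < s + 1 → F x = x / (a + x) := by
      intro x h1 h2
      exact solveF (lt_trans hspos h1) (hFmid x h1 h2).1 (hFmid x h1 h2).2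
        (hkey x p' h1 h2 hp'1 hp'2)
    have hat : a + s ≠ 0 := by positivity
    have hFs2 : F s = s / (a + s) := limit_right (by linarith) hat hconts heq
    rw [hFs, eq_comm, div_eq_zero_iff] at hFs2
    rcases hFs2 with h | h
    · linarith
    · exact hat h
  -- Step 3: 0 < F < 1 everywhere, so H is constant and F x = x/(a+x)
  have h01 : 0 < F 1 := hpos 1 one_pos
  have h11 : F 1 < 1 := hlt 1 one_pos
  refine Or.inr ⟨(1 : ℝ) * (1 - F 1) / F 1,
    div_pos (mul_pos one_pos (by linarith)) h01, ?_⟩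
  intro x hx
  set p : ℝ := min x 1 / 2 with hpdef
  have hminpos : 0 < min x 1 := lt_min hx one_pos
  have hp : 0 < p := by positivity
  have hFmid : ∀ z, p < z → z < max x 1 + 1 → 0 < F z ∧ F z < 1 := by
    intro z h1 _
    exact ⟨hpos z (lt_trans hp h1), hlt z (lt_trans hp h1)⟩
  have hpx : p < x :=
    lt_of_lt_of_le (by rw [hpdef]; linarith [min_le_left x 1]) (le_refl x) |>.trans_le (le_refl x)
  have hpx' : p < x := by
    rw [hpdef]
    have := min_le_left x 1
    linarith
  have hp1 : p < 1 := by
    rw [hpdef]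
    have := min_le_right x 1
    linarith
  have hxq : x < max x 1 + 1 := by
    have := le_max_left x 1
    linarith
  have h1q : (1:ℝ) < max x 1 + 1 := by
    have := le_max_right x 1
    linarith
  exact solveF hx (hpos x hx) (hlt x hx)
    (Hconst hderiv hp hFmid x 1 hpx' hxq hp1 h1q)
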